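/- Let E be a row-finite directed graph and K a field. The Cohn path algebra C_K(E) is prime if and only if E has exactly one vertex. -/

import Mathlib

/-! Basic infrastructure: directed graphs and their path algebras.

The path algebra `KE` is realized as the non-unital subalgebra generated by the
(images of the) vertices and edges inside the unital algebra `PA K E`, which is the
quotient of the free algebra on vertices and edges by the usual path-algebra
relations (vertices are orthogonal idempotents acting as local units on edges).
Words of composable edges are exactly the paths, so `KE` has the paths as a basis. -/

/-- A directed graph `E = (E⁰, E¹, s, r)`. -/
structure DirGraph : Type 1 where
  V : Type
  Edge : Type
  s : Edge → V
  r : Edge → V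

/-- A (non-unital, possibly non-closed) subset `S` of an algebra is *prime* if it is nonzero
and `a S b = 0` implies `a = 0` or `b = 0` for `a, b ∈ S`. -/
def IsPrimeSet {A : Type} [NonUnitalNonAssocSemiring A] (S : Set A) : Prop :=
  (∃ a ∈ S, a ≠ 0) ∧ ∀ a ∈ S, ∀ b ∈ S, (∀ x ∈ S, a * x * b = 0) → a = 0 ∨ b = 0

/-- `J` is a two-sided ideal of the (possibly non-unital) subalgebra with carrier `S`. -/
def IsIdealOf (K : Type) [Field K] {A : Type} [Ring A] [Algebra K A] (S J : Set A) : Prop :=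
  J ⊆ S ∧ (0 : A) ∈ J ∧ (∀ x ∈ J, ∀ y ∈ J, x + y ∈ J) ∧
    (∀ k : K, ∀ x ∈ J, k • x ∈ J) ∧ (∀ a ∈ S, ∀ x ∈ J, a * x ∈ J ∧ x * a ∈ J)

namespace DirGraph

/-- Generators of the path algebra: vertices and edges. -/
abbrev Gen (E : DirGraph) : Type := E.V ⊕ E.Edge

variable (K : Type) [Field K] (E : DirGraph)

/-- The defining relations of the path algebra: vertices are orthogonal idempotents,
`s(e)·e = e`, `e·r(e) = e`, and all other vertex-edge products vanish. -/
inductive PathRel : FreeAlgebra K E.Gen → FreeAlgebra K E.Gen → Prop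
  | vv_eq (u : E.V) :
      PathRel (FreeAlgebra.ι K (Sum.inl u) * FreeAlgebra.ι K (Sum.inl u))
        (FreeAlgebra.ι K (Sum.inl u))
  | vv_ne (u v : E.V) : u ≠ v →
      PathRel (FreeAlgebra.ι K (Sum.inl u) * FreeAlgebra.ι K (Sum.inl v)) 0
  | ve_eq (e : E.Edge) :
      PathRel (FreeAlgebra.ι K (Sum.inl (E.s e)) * FreeAlgebra.ι K (Sum.inr e))
        (FreeAlgebra.ι K (Sum.inr e))
  | ve_ne (u : E.V) (e : E.Edge) : E.s e ≠ u →
      PathRel (FreeAlgebra.ι K (Sum.inl u) * FreeAlgebra.ι K (Sum.inr e)) 0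
  | ev_eq (e : E.Edge) :
      PathRel (FreeAlgebra.ι K (Sum.inr e) * FreeAlgebra.ι K (Sum.inl (E.r e)))
        (FreeAlgebra.ι K (Sum.inr e))
  | ev_ne (e : E.Edge) (u : E.V) : E.r e ≠ u →
      PathRel (FreeAlgebra.ι K (Sum.inr e) * FreeAlgebra.ι K (Sum.inl u)) 0

/-- The ambient unital algebra (the unitalization of the path algebra). -/
abbrev PA : Type := RingQuot (E.PathRel K)

/-- The image of a vertex in the path algebra. -/
noncomputable def vtx (u : E.V) : E.PA K :=
  RingQuot.mkAlgHom K (E.PathRel K) (FreeAlgebra.ι K (Sum.inl u))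

/-- The image of an edge in the path algebra. -/
noncomputable def edg (e : E.Edge) : E.PA K :=
  RingQuot.mkAlgHom K (E.PathRel K) (FreeAlgebra.ι K (Sum.inr e))

/-- The path algebra `KE`: the (non-unital) subalgebra spanned by all paths, i.e.
generated by the vertices and edges. -/
noncomputable def KE : NonUnitalSubalgebra K (E.PA K) :=
  NonUnitalAlgebra.adjoin K (Set.range (E.vtx K) ∪ Set.range (E.edg K))

/-- The center `Z(KE)` of the path algebra. -/
def relCenter : Set (E.PA K) :=
  {z | z ∈ E.KE K ∧ ∀ a ∈ E.KE K, a * z = z * a}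

/-- `E.IsPathFrom u v l` : the list of edges `l` is a path from `u` to `v`
(`l = []` is the trivial path at `u = v`). -/
def IsPathFrom : E.V → E.V → List E.Edge → Prop
  | u, v, [] => u = v
  | u, v, e :: l => E.s e = u ∧ IsPathFrom (E.r e) v l

/-- The element of the path algebra corresponding to the path starting at `u`
with list of edges `l` (for `l = []` this is the vertex `u` itself). -/
noncomputable def pathElem (u : E.V) (l : List E.Edge) : E.PA K :=
  E.vtx K u * (l.map (E.edg K)).prod

/-- The sum of all vertices: the unit of `KE` when `E⁰` is finite. -/
noncomputable def unitKE : E.PA K := ∑ᶠ u : E.V, E.vtx K u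

/-- The scalar multiples `K·1` of the unit of `KE`. -/
noncomputable def scalarSet : Set (E.PA K) := Set.range fun k : K => k • E.unitKE K

/-- One step in the underlying undirected graph. -/
def Step (u v : E.V) : Prop :=
  (∃ e : E.Edge, E.s e = u ∧ E.r e = v) ∨ (∃ e : E.Edge, E.s e = v ∧ E.r e = u)

/-- `u ∼ v` : the vertices `u` and `v` are connected in the underlying undirected graph. -/
def Connected (u v : E.V) : Prop := Relation.ReflTransGen E.Step u v

/-- The graph `E` is connected. -/
def IsConnectedGraph : Prop := ∀ u v : E.V, E.Connected u v

/-- The graph `E` is a cycle: `n ≥ 1` vertices `u₁, …, uₙ` and `n` edges `f₁, …, fₙ` with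
`s(fᵢ) = uᵢ`, `r(fᵢ) = uᵢ₊₁` (indices mod `n`). -/
def IsCycleGraph : Prop :=
  ∃ n : ℕ, ∃ hn : 0 < n, ∃ (hv : Fin n ≃ E.V) (he : Fin n ≃ E.Edge),
    ∀ i : Fin n, E.s (he i) = hv i ∧ E.r (he i) = hv ⟨(i.1 + 1) % n, Nat.mod_lt _ hn⟩

end DirGraph

namespace DirGraph

/-- The extended graph `Ê`: same vertices, edges `E¹ ⊕ (E¹)*`, where the ghost edge `e*`
(second component) has `s(e*) = r(e)` and `r(e*) = s(e)`. -/
def ext (E : DirGraph) : DirGraph where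
  V := E.V
  Edge := E.Edge ⊕ E.Edge
  s := Sum.elim E.s E.r
  r := Sum.elim E.r E.s

variable (K : Type) [Field K] (E : DirGraph)

/-- Defining relations of the Cohn (`t = false`) and Leavitt (`t = true`) path algebras:
the path-algebra relations of the extended graph, the relations (CK1)
`e*e' = δ_{e,e'} r(e)`, and — only for `t = true` — the relations (CK2)
`v = Σ_{s(e)=v} ee*` at every regular vertex `v`. -/
inductive CLRel : Bool → FreeAlgebra K E.ext.Gen → FreeAlgebra K E.ext.Gen → Prop
  | base (t : Bool) {a b : FreeAlgebra K E.ext.Gen} : E.ext.PathRel K a b → CLRel t a b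
  | ck1_eq (t : Bool) (e : E.Edge) :
      CLRel t (FreeAlgebra.ι K (Sum.inr (Sum.inr e)) * FreeAlgebra.ι K (Sum.inr (Sum.inl e)))
        (FreeAlgebra.ι K (Sum.inl (E.r e)))
  | ck1_ne (t : Bool) (e f : E.Edge) : e ≠ f →
      CLRel t (FreeAlgebra.ι K (Sum.inr (Sum.inr e)) * FreeAlgebra.ι K (Sum.inr (Sum.inl f))) 0
  | ck2 (v : E.V) (h : {e : E.Edge | E.s e = v}.Finite)
      (hne : {e : E.Edge | E.s e = v}.Nonempty) :
      CLRel true (FreeAlgebra.ι K (Sum.inl v))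
        (h.toFinset.sum fun e =>
          FreeAlgebra.ι K (Sum.inr (Sum.inl e)) * FreeAlgebra.ι K (Sum.inr (Sum.inr e)))

/-- The ambient unital algebra containing the Cohn (`t = false`) or
Leavitt (`t = true`) path algebra. -/
abbrev CL (t : Bool) : Type := RingQuot (E.CLRel K t)

/-- The image of a vertex in `C_K(E)` / `L_K(E)`. -/
noncomputable def clvtx (t : Bool) (u : E.V) : E.CL K t :=
  RingQuot.mkAlgHom K (E.CLRel K t) (FreeAlgebra.ι K (Sum.inl u))

/-- The image of a (real) edge in `C_K(E)` / `L_K(E)`. -/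
noncomputable def cledg (t : Bool) (e : E.Edge) : E.CL K t :=
  RingQuot.mkAlgHom K (E.CLRel K t) (FreeAlgebra.ι K (Sum.inr (Sum.inl e)))

/-- The image of a ghost edge `e*` in `C_K(E)` / `L_K(E)`. -/
noncomputable def clghost (t : Bool) (e : E.Edge) : E.CL K t :=
  RingQuot.mkAlgHom K (E.CLRel K t) (FreeAlgebra.ι K (Sum.inr (Sum.inr e)))

/-- The Cohn path algebra `C_K(E)` (`t = false`) or Leavitt path algebra `L_K(E)`
(`t = true`): the non-unital subalgebra generated by vertices, edges, and ghost edges. -/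
noncomputable def clSub (t : Bool) : NonUnitalSubalgebra K (E.CL K t) :=
  NonUnitalAlgebra.adjoin K
    (Set.range (E.clvtx K t) ∪ Set.range (E.cledg K t) ∪ Set.range (E.clghost K t))

/-- The center of `C_K(E)` (`t = false`) or of `L_K(E)` (`t = true`). -/
def clCenter (t : Bool) : Set (E.CL K t) :=
  {z | z ∈ E.clSub K t ∧ ∀ a ∈ E.clSub K t, a * z = z * a}

/-- The element `μ` of `C_K(E)` / `L_K(E)` for the path `μ` starting at `u` with edges `l`. -/
noncomputable def clPath (t : Bool) (u : E.V) (l : List E.Edge) : E.CL K t :=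
  E.clvtx K t u * (l.map (E.cledg K t)).prod

/-- The element `μ*` of `C_K(E)` / `L_K(E)` for the path `μ` starting at `u` with edges `l`. -/
noncomputable def clPathStar (t : Bool) (u : E.V) (l : List E.Edge) : E.CL K t :=
  ((l.map (E.clghost K t)).reverse).prod * E.clvtx K t u

/-- The sum of all vertices: the unit of `C_K(E)` / `L_K(E)` when `E⁰` is finite. -/
noncomputable def clOne (t : Bool) : E.CL K t := ∑ᶠ u : E.V, E.clvtx K t u

/-- The degree-zero component (w.r.t. the canonical ℤ-grading) of `C_K(E)` / `L_K(E)`: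
the span of the elements `στ*` with `σ, τ` paths of equal length and common range. -/
def clDeg0 (t : Bool) : Submodule K (E.CL K t) :=
  Submodule.span K {x : E.CL K t | ∃ (u w v : E.V) (l m : List E.Edge),
    E.IsPathFrom u v l ∧ E.IsPathFrom w v m ∧ l.length = m.length ∧
    x = E.clPath K t u l * E.clPathStar K t w m}

/-- The span of the symmetric elements `μμ*`, `μ` a path of `E`. -/
def clSymmSpan (t : Bool) : Submodule K (E.CL K t) :=
  Submodule.span K {x : E.CL K t | ∃ (u v : E.V) (l : List E.Edge),
    E.IsPathFrom u v l ∧ x = E.clPath K t u l * E.clPathStar K t u l}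

/-- A subset `H ⊆ E⁰` is hereditary if paths starting in `H` end in `H`. -/
def Hereditary (H : Set E.V) : Prop :=
  ∀ (u v : E.V) (l : List E.Edge), E.IsPathFrom u v l → u ∈ H → v ∈ H

/-- The two-sided ideal of `C_K(E)` / `L_K(E)` generated by a subset `S₀`. -/
def clIdealGen (t : Bool) (S₀ : Set (E.CL K t)) : Set (E.CL K t) :=
  ⋂₀ {J : Set (E.CL K t) | IsIdealOf K (E.clSub K t : Set (E.CL K t)) J ∧ S₀ ⊆ J}

/-- `c` is a cycle based at `u`: a nontrivial closed path visiting no vertex twice. -/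
def IsCycle (u : E.V) (l : List E.Edge) : Prop :=
  l ≠ [] ∧ E.IsPathFrom u u l ∧ (l.map E.s).Nodup

/-- The (closed) path `l` has an exit. -/
def HasExit (l : List E.Edge) : Prop :=
  ∃ f : E.Edge, ∃ e ∈ l, E.s f = E.s e ∧ f ≠ e

/-- Condition (L): every cycle of `E` has an exit. -/
def CondL : Prop := ∀ (u : E.V) (l : List E.Edge), E.IsCycle u l → E.HasExit l

/-- The set of paths (given by their source and list of edges) that end at a vertex of the
cycle `c` and do not contain all the edges of `c`. -/
def endsAtNotContaining (c : List E.Edge) : Set (E.V × List E.Edge) :=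
  {p | (∃ v : E.V, (∃ e ∈ c, E.s e = v) ∧ E.IsPathFrom p.1 v p.2) ∧ ∃ e ∈ c, e ∉ p.2}

/-- `c` is the unique cycle of `E` without exits (uniqueness as a cycle: any cycle
without exits has the same edges as `c`). -/
def UniqueNoExitCycle (c : List E.Edge) : Prop :=
  (∃ u : E.V, E.IsCycle u c ∧ ¬ E.HasExit c) ∧
    ∀ (u' : E.V) (c' : List E.Edge), E.IsCycle u' c' → ¬ E.HasExit c' →
      ∀ e : E.Edge, e ∈ c' ↔ e ∈ c

end DirGraph


/-! ### Auxiliary development for Statement 14 -/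

namespace Stmt14
open DirGraph

variable {K : Type} [Field K] {E : DirGraph}

/-- short name for vertex images in the Cohn algebra -/
noncomputable def vv (K : Type) [Field K] (E : DirGraph) (u : E.V) : E.CL K false :=
  E.clvtx K false u
noncomputable def ed (K : Type) [Field K] (E : DirGraph) (e : E.Edge) : E.CL K false :=
  E.cledg K false e
noncomputable def gh (K : Type) [Field K] (E : DirGraph) (e : E.Edge) : E.CL K false :=
  E.clghost K false e

section BasicRel

variable (K E)

lemma rel_eq {a b : FreeAlgebra K E.ext.Gen} (h : E.CLRel K false a b) :
    RingQuot.mkAlgHom K (E.CLRel K false) a = RingQuot.mkAlgHom K (E.CLRel K false) b :=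
  RingQuot.mkAlgHom_rel K h

lemma vv_mul_self (u : E.V) : vv K E u * vv K E u = vv K E u := by
  have := rel_eq K E (CLRel.base false (PathRel.vv_eq (E := E.ext) u))
  simpa [vv, clvtx, map_mul] using this

lemma vv_mul_ne {u w : E.V} (h : u ≠ w) : vv K E u * vv K E w = 0 := by
  have := rel_eq K E (CLRel.base false (PathRel.vv_ne (E := E.ext) u w h))
  simpa [vv, clvtx, map_mul] using this

lemma vv_mul_ed (e : E.Edge) : vv K E (E.s e) * ed K E e = ed K E e := by
  have := rel_eq K E (CLRel.base false (PathRel.ve_eq (E := E.ext) (Sum.inl e)))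
  rw [vv, ed, clvtx, cledg, ← map_mul]; exact this

lemma vv_mul_ed_ne {u : E.V} {e : E.Edge} (h : E.s e ≠ u) : vv K E u * ed K E e = 0 := by
  have := rel_eq K E (CLRel.base false (PathRel.ve_ne (E := E.ext) u (Sum.inl e) h))
  rw [vv, ed, clvtx, cledg, ← map_mul]; exact this.trans (map_zero _)

lemma ed_mul_vv (e : E.Edge) : ed K E e * vv K E (E.r e) = ed K E e := by
  have := rel_eq K E (CLRel.base false (PathRel.ev_eq (E := E.ext) (Sum.inl e)))
  rw [vv, ed, clvtx, cledg, ← map_mul]; exact this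

lemma ed_mul_vv_ne {u : E.V} {e : E.Edge} (h : E.r e ≠ u) : ed K E e * vv K E u = 0 := by
  have := rel_eq K E (CLRel.base false (PathRel.ev_ne (E := E.ext) (Sum.inl e) u h))
  rw [vv, ed, clvtx, cledg, ← map_mul]; exact this.trans (map_zero _)

lemma vv_mul_gh (e : E.Edge) : vv K E (E.r e) * gh K E e = gh K E e := by
  have := rel_eq K E (CLRel.base false (PathRel.ve_eq (E := E.ext) (Sum.inr e)))
  rw [vv, gh, clvtx, clghost, ← map_mul]; exact this

lemma vv_mul_gh_ne {u : E.V} {e : E.Edge} (h : E.r e ≠ u) : vv K E u * gh K E e = 0 := by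
  have := rel_eq K E (CLRel.base false (PathRel.ve_ne (E := E.ext) u (Sum.inr e) h))
  rw [vv, gh, clvtx, clghost, ← map_mul]; exact this.trans (map_zero _)

lemma gh_mul_vv (e : E.Edge) : gh K E e * vv K E (E.s e) = gh K E e := by
  have := rel_eq K E (CLRel.base false (PathRel.ev_eq (E := E.ext) (Sum.inr e)))
  rw [vv, gh, clvtx, clghost, ← map_mul]; exact this

lemma gh_mul_vv_ne {u : E.V} {e : E.Edge} (h : E.s e ≠ u) : gh K E e * vv K E u = 0 := by
  have := rel_eq K E (CLRel.base false (PathRel.ev_ne (E := E.ext) (Sum.inr e) u h))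
  rw [vv, gh, clvtx, clghost, ← map_mul]; exact this.trans (map_zero _)

lemma gh_mul_ed (e : E.Edge) : gh K E e * ed K E e = vv K E (E.r e) := by
  have := rel_eq K E (CLRel.ck1_eq false e)
  rw [vv, gh, ed, clvtx, cledg, clghost, ← map_mul]; exact this

lemma gh_mul_ed_ne {e f : E.Edge} (h : e ≠ f) : gh K E e * ed K E f = 0 := by
  have := rel_eq K E (CLRel.ck1_ne false e f h)
  rw [gh, ed, cledg, clghost, ← map_mul]; exact this.trans (map_zero _)

end BasicRel


section Rep

variable (K E)

/-- the module on which the Cohn algebra acts: basis indexed by (vertex, word). -/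
abbrev W := (E.V × List E.Edge) →₀ K

open Classical in
/-- action of a generator on a basis element -/
noncomputable def st : E.ext.Gen → E.V × List E.Edge → W K E
  | Sum.inl w, (u, l) => if u = w then Finsupp.single (u, l) 1 else 0
  | Sum.inr (Sum.inl e), (u, l) =>
      if E.r e = u then Finsupp.single (E.s e, e :: l) 1 else 0
  | Sum.inr (Sum.inr e), (u, l) =>
      match l with
      | [] => 0
      | f :: l' => if f = e ∧ u = E.s e then Finsupp.single (E.r e, l') 1 else 0

noncomputable def rho (g : E.ext.Gen) : Module.End K (W K E) :=
  Finsupp.lift (W K E) K _ (st K E g)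

lemma rho_single (g : E.ext.Gen) (x : E.V × List E.Edge) :
    rho K E g (Finsupp.single x 1) = st K E g x := by
  simp [rho, Finsupp.lift_apply, Finsupp.sum_single_index]

lemma end_ext {f g : Module.End K (W K E)}
    (h : ∀ x, f (Finsupp.single x 1) = g (Finsupp.single x 1)) : f = g := by
  refine Finsupp.lhom_ext' fun x => LinearMap.ext_ring ?_
  simpa using h x

noncomputable def Phi : FreeAlgebra K E.ext.Gen →ₐ[K] Module.End K (W K E) :=
  FreeAlgebra.lift K (rho K E)

lemma ext_s_inl (e : E.Edge) : E.ext.s (Sum.inl e) = E.s e := rfl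
lemma ext_s_inr (e : E.Edge) : E.ext.s (Sum.inr e) = E.r e := rfl
lemma ext_r_inl (e : E.Edge) : E.ext.r (Sum.inl e) = E.r e := rfl
lemma ext_r_inr (e : E.Edge) : E.ext.r (Sum.inr e) = E.s e := rfl

lemma Phi_rel : ∀ ⦃a b : FreeAlgebra K E.ext.Gen⦄, E.CLRel K false a b → Phi K E a = Phi K E b := by
  intro a b h
  cases h with
  | base t hpr =>
    induction hpr with
    | vv_eq u =>
      change E.V at u
      simp only [Phi, map_mul, FreeAlgebra.lift_ι_apply]
      refine end_ext K E fun x => ?_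
      obtain ⟨u', l⟩ := x
      by_cases hu : u' = u <;>
        simp [Module.End.mul_apply, rho_single, st, ext_s_inl, ext_s_inr, ext_r_inl, ext_r_inr, hu]
    | vv_ne u w hne =>
      change E.V at u w
      change u ≠ w at hne
      simp only [Phi, map_mul, map_zero, FreeAlgebra.lift_ι_apply]
      refine end_ext K E fun x => ?_
      obtain ⟨u', l⟩ := x
      by_cases hu : u' = w
      · subst hu
        simp [Module.End.mul_apply, rho_single, st, ext_s_inl, ext_s_inr, ext_r_inl, ext_r_inr, Ne.symm hne]
      · simp [Module.End.mul_apply, rho_single, st, ext_s_inl, ext_s_inr, ext_r_inl, ext_r_inr, hu]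
    | ve_eq e =>
      simp only [Phi, map_mul, FreeAlgebra.lift_ι_apply]
      refine end_ext K E fun x => ?_
      obtain ⟨u', l⟩ := x
      cases e with
      | inl e =>
        by_cases hu : E.r e = u' <;>
          simp [Module.End.mul_apply, rho_single, st, ext_s_inl, ext_s_inr, ext_r_inl, ext_r_inr, hu]
      | inr e =>
        cases l with
        | nil => simp [Module.End.mul_apply, rho_single, st, ext_s_inl, ext_s_inr, ext_r_inl, ext_r_inr]
        | cons f l' =>
          by_cases hf : f = e ∧ u' = E.s e <;>
            simp [Module.End.mul_apply, rho_single, st, ext_s_inl, ext_s_inr, ext_r_inl, ext_r_inr, hf]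
    | ve_ne u e hne =>
      change E.V at u
      simp only [Phi, map_mul, map_zero, FreeAlgebra.lift_ι_apply]
      refine end_ext K E fun x => ?_
      obtain ⟨u', l⟩ := x
      cases e with
      | inl e =>
        have hne' : E.s e ≠ u := hne
        by_cases hu : E.r e = u' <;>
          simp [Module.End.mul_apply, rho_single, st, ext_s_inl, ext_s_inr, ext_r_inl, ext_r_inr, hu, hne']
      | inr e =>
        have hne' : E.r e ≠ u := hne
        cases l with
        | nil => simp [Module.End.mul_apply, rho_single, st, ext_s_inl, ext_s_inr, ext_r_inl, ext_r_inr]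
        | cons f l' =>
          by_cases hf : f = e ∧ u' = E.s e <;>
            simp [Module.End.mul_apply, rho_single, st, ext_s_inl, ext_s_inr, ext_r_inl, ext_r_inr, hf, hne']
    | ev_eq e =>
      simp only [Phi, map_mul, FreeAlgebra.lift_ι_apply]
      refine end_ext K E fun x => ?_
      obtain ⟨u', l⟩ := x
      cases e with
      | inl e =>
        by_cases hu : u' = E.r e
        · subst hu; simp [Module.End.mul_apply, rho_single, st, ext_s_inl, ext_s_inr, ext_r_inl, ext_r_inr]
        · simp [Module.End.mul_apply, rho_single, st, ext_s_inl, ext_s_inr, ext_r_inl, ext_r_inr, hu, Ne.symm hu]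
      | inr e =>
        by_cases hu : u' = E.s e
        · subst hu
          cases l with
          | nil => simp [Module.End.mul_apply, rho_single, st, ext_s_inl, ext_s_inr, ext_r_inl, ext_r_inr]
          | cons f l' =>
            by_cases hf : f = e <;>
              simp [Module.End.mul_apply, rho_single, st, ext_s_inl, ext_s_inr, ext_r_inl, ext_r_inr, hf]
        · cases l with
          | nil => simp [Module.End.mul_apply, rho_single, st, ext_s_inl, ext_s_inr, ext_r_inl, ext_r_inr, hu]
          | cons f l' => simp [Module.End.mul_apply, rho_single, st, ext_s_inl, ext_s_inr, ext_r_inl, ext_r_inr, hu]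
    | ev_ne e u hne =>
      change E.V at u
      simp only [Phi, map_mul, map_zero, FreeAlgebra.lift_ι_apply]
      refine end_ext K E fun x => ?_
      obtain ⟨u', l⟩ := x
      cases e with
      | inl e =>
        by_cases hu : u' = u
        · subst hu
          have : E.r e ≠ u' := by simpa [ext] using hne
          simp [Module.End.mul_apply, rho_single, st, ext_s_inl, ext_s_inr, ext_r_inl, ext_r_inr, this]
        · simp [Module.End.mul_apply, rho_single, st, ext_s_inl, ext_s_inr, ext_r_inl, ext_r_inr, hu]
      | inr e =>
        by_cases hu : u' = u
        · subst hu
          have hse : E.s e ≠ u' := by simpa [ext] using hne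
          cases l with
          | nil => simp [Module.End.mul_apply, rho_single, st, ext_s_inl, ext_s_inr, ext_r_inl, ext_r_inr]
          | cons f l' =>
            simp [Module.End.mul_apply, rho_single, st, ext_s_inl, ext_s_inr, ext_r_inl, ext_r_inr, Ne.symm hse]
        · simp [Module.End.mul_apply, rho_single, st, ext_s_inl, ext_s_inr, ext_r_inl, ext_r_inr, hu]
  | ck1_eq t e =>
    change Phi K E (FreeAlgebra.ι K (X := E.ext.Gen) (Sum.inr (Sum.inr e)) * FreeAlgebra.ι K (X := E.ext.Gen) (Sum.inr (Sum.inl e))) = Phi K E (FreeAlgebra.ι K (X := E.ext.Gen) (Sum.inl (E.r e)))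
    simp only [Phi, map_mul, FreeAlgebra.lift_ι_apply]
    refine end_ext K E fun x => ?_
    obtain ⟨u', l⟩ := x
    by_cases hu : E.r e = u' <;>
      simp [Module.End.mul_apply, rho_single, st, ext_s_inl, ext_s_inr, ext_r_inl, ext_r_inr, hu, fun h : ¬(E.r e = u') => Ne.symm h]
  | ck1_ne t e f hef =>
    change Phi K E (FreeAlgebra.ι K (X := E.ext.Gen) (Sum.inr (Sum.inr e)) * FreeAlgebra.ι K (X := E.ext.Gen) (Sum.inr (Sum.inl f))) = Phi K E 0
    simp only [Phi, map_mul, map_zero, FreeAlgebra.lift_ι_apply]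
    refine end_ext K E fun x => ?_
    obtain ⟨u', l⟩ := x
    by_cases hu : E.r f = u' <;>
      simp [Module.End.mul_apply, rho_single, st, ext_s_inl, ext_s_inr, ext_r_inl, ext_r_inr, hu, Ne.symm hef]

noncomputable def psi : E.CL K false →ₐ[K] Module.End K (W K E) :=
  RingQuot.liftAlgHom K ⟨Phi K E, fun _ _ h => Phi_rel K E h⟩

lemma psi_vv (u : E.V) : psi K E (vv K E u) = rho K E (Sum.inl u) := by
  simp [psi, vv, clvtx, RingQuot.liftAlgHom_mkAlgHom_apply, Phi, FreeAlgebra.lift_ι_apply]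

lemma psi_ed (e : E.Edge) : psi K E (ed K E e) = rho K E (Sum.inr (Sum.inl e)) := by
  simp [psi, ed, cledg, RingQuot.liftAlgHom_mkAlgHom_apply, Phi, FreeAlgebra.lift_ι_apply]

lemma psi_gh (e : E.Edge) : psi K E (gh K E e) = rho K E (Sum.inr (Sum.inr e)) := by
  simp [psi, gh, clghost, RingQuot.liftAlgHom_mkAlgHom_apply, Phi, FreeAlgebra.lift_ι_apply]

lemma vv_ne_zero (u : E.V) : vv K E u ≠ 0 := by
  intro h
  have h2 := congrArg (fun z => psi K E z (Finsupp.single (u, ([] : List E.Edge)) 1)) h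
  simp only [psi_vv, map_zero, LinearMap.zero_apply, rho_single, st, if_pos rfl] at h2
  exact one_ne_zero (Finsupp.single_eq_zero.mp h2)

/-- the element `q_u = u - ∑_{s(e)=u} e e*` -/
noncomputable def qq (u : E.V) (hu : {e : E.Edge | E.s e = u}.Finite) : E.CL K false :=
  vv K E u - hu.toFinset.sum fun e => ed K E e * gh K E e

lemma qq_ne_zero (u : E.V) (hu : {e : E.Edge | E.s e = u}.Finite) : qq K E u hu ≠ 0 := by
  intro h
  have h2 := congrArg (fun z => psi K E z (Finsupp.single (u, ([] : List E.Edge)) 1)) h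
  simp only [qq, map_sub, map_sum, map_mul, LinearMap.sub_apply, LinearMap.zero_apply,
    LinearMap.coe_sum, Finset.sum_apply, Module.End.mul_apply, psi_vv, psi_ed, psi_gh,
    map_zero, rho_single, st, if_pos rfl] at h2
  rw [Finset.sum_eq_zero (fun e _ => by simp [rho_single, st]), sub_zero] at h2
  exact one_ne_zero (Finsupp.single_eq_zero.mp h2)

end Rep


section TwoVertices

variable (K E)
variable (u : E.V) (hu : {e : E.Edge | E.s e = u}.Finite)

lemma gh_mul_qq (e : E.Edge) : gh K E e * qq K E u hu = 0 := by
  classical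
  rw [qq, mul_sub, Finset.mul_sum]
  have hterm : ∀ f ∈ hu.toFinset, gh K E e * (ed K E f * gh K E f) =
      if e = f then gh K E e else 0 := by
    intro f _
    by_cases hef : e = f
    · subst hef
      rw [← mul_assoc, gh_mul_ed, vv_mul_gh]
      simp
    · rw [← mul_assoc, gh_mul_ed_ne K E hef, zero_mul, if_neg hef]
  rw [Finset.sum_congr rfl hterm, Finset.sum_ite_eq]
  by_cases hse : E.s e = u
  · rw [if_pos (by simpa using hse)]
    rw [show gh K E e * vv K E u = gh K E e by rw [← hse, gh_mul_vv], sub_self]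
  · rw [if_neg (by simpa using hse), gh_mul_vv_ne K E hse, sub_zero]

lemma qq_mul_ed (e : E.Edge) : qq K E u hu * ed K E e = 0 := by
  classical
  rw [qq, sub_mul, Finset.sum_mul]
  have hterm : ∀ f ∈ hu.toFinset, ed K E f * gh K E f * ed K E e =
      if f = e then ed K E e else 0 := by
    intro f _
    by_cases hef : f = e
    · subst hef
      rw [mul_assoc, gh_mul_ed, ed_mul_vv, if_pos rfl]
    · rw [mul_assoc, gh_mul_ed_ne K E hef, mul_zero, if_neg hef]
  rw [Finset.sum_congr rfl hterm, Finset.sum_ite_eq']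
  by_cases hse : E.s e = u
  · rw [if_pos (by simpa using hse), show vv K E u * ed K E e = ed K E e by
      rw [← hse, vv_mul_ed], sub_self]
  · rw [if_neg (by simpa using hse), vv_mul_ed_ne K E hse, sub_zero]

lemma qq_mul_vv_self : qq K E u hu * vv K E u = qq K E u hu := by
  rw [qq, sub_mul, Finset.sum_mul, vv_mul_self]
  congr 1
  refine Finset.sum_congr rfl fun f hf => ?_
  have hsf : E.s f = u := by simpa using hf
  rw [mul_assoc, ← hsf, gh_mul_vv]

lemma qq_mul_vv_ne {w : E.V} (hw : w ≠ u) : qq K E u hu * vv K E w = 0 := by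
  rw [qq, sub_mul, Finset.sum_mul, vv_mul_ne K E (Ne.symm hw)]
  rw [Finset.sum_eq_zero, sub_zero]
  intro f hf
  have hsf : E.s f = u := by simpa using hf
  rw [mul_assoc, gh_mul_vv_ne K E (by rw [hsf]; exact Ne.symm hw), mul_zero]

lemma vv_mul_qq_self : vv K E u * qq K E u hu = qq K E u hu := by
  rw [qq, mul_sub, Finset.mul_sum, vv_mul_self]
  congr 1
  refine Finset.sum_congr rfl fun f hf => ?_
  have hsf : E.s f = u := by simpa using hf
  rw [← mul_assoc, ← hsf, vv_mul_ed]

lemma mul_qq_expand {w : E.V} (hw : {e : E.Edge | E.s e = w}.Finite) (x : E.CL K false) :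
    x * qq K E w hw = x * vv K E w - ∑ f ∈ hw.toFinset, x * (ed K E f * gh K E f) := by
  rw [qq, mul_sub, Finset.mul_sum]

lemma qq_mul_qq_self : qq K E u hu * qq K E u hu = qq K E u hu := by
  rw [mul_qq_expand K E hu, qq_mul_vv_self]
  rw [Finset.sum_eq_zero, sub_zero]
  intro f _
  rw [← mul_assoc, qq_mul_ed, zero_mul]

lemma qq_mul_qq_ne {w : E.V} (hw : {e : E.Edge | E.s e = w}.Finite) (hne : w ≠ u) :
    qq K E u hu * qq K E w hw = 0 := by
  rw [mul_qq_expand K E hw, qq_mul_vv_ne K E u hu hne]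
  rw [Finset.sum_eq_zero, sub_zero]
  intro f _
  rw [← mul_assoc, qq_mul_ed, zero_mul]

/-- `q_u e₁* ⋯ eₖ*` -/
noncomputable def gq : List E.Edge → E.CL K false
  | [] => qq K E u hu
  | e :: m => gq m * gh K E e

/-- the right module generated by `q_u` inside ghost words -/
noncomputable def MM : Submodule K (E.CL K false) :=
  Submodule.span K (Set.range (gq K E u hu))

lemma gq_mem (m : List E.Edge) : gq K E u hu m ∈ MM K E u hu :=
  Submodule.subset_span ⟨m, rfl⟩

lemma gq_mul_vv_mem (m : List E.Edge) (w : E.V) :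
    gq K E u hu m * vv K E w ∈ MM K E u hu := by
  cases m with
  | nil =>
    by_cases hw : w = u
    · rw [gq, hw, qq_mul_vv_self]; exact gq_mem K E u hu []
    · rw [gq, qq_mul_vv_ne K E u hu hw]; exact Submodule.zero_mem _
  | cons e m =>
    rw [gq, mul_assoc]
    by_cases hw : E.s e = w
    · rw [← hw, gh_mul_vv]; exact gq_mem K E u hu (e :: m)
    · rw [gh_mul_vv_ne K E hw, mul_zero]; exact Submodule.zero_mem _

lemma gq_mul_ed_mem (m : List E.Edge) (e : E.Edge) :
    gq K E u hu m * ed K E e ∈ MM K E u hu := by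
  cases m with
  | nil => rw [gq, qq_mul_ed]; exact Submodule.zero_mem _
  | cons f m =>
    rw [gq, mul_assoc]
    by_cases hef : f = e
    · subst hef; rw [gh_mul_ed]; exact gq_mul_vv_mem K E u hu m _
    · rw [gh_mul_ed_ne K E hef, mul_zero]; exact Submodule.zero_mem _

lemma gq_mul_gh_mem (m : List E.Edge) (e : E.Edge) :
    gq K E u hu m * gh K E e ∈ MM K E u hu :=
  gq_mem K E u hu (e :: m)

lemma MM_mul_gen_mem (y : E.CL K false) (hy : y ∈ MM K E u hu)
    (g : E.CL K false)
    (hg : g ∈ (Set.range (E.clvtx K false) ∪ Set.range (E.cledg K false) ∪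
      Set.range (E.clghost K false))) :
    y * g ∈ MM K E u hu := by
  induction hy using Submodule.span_induction with
  | mem x hx =>
    obtain ⟨m, rfl⟩ := hx
    rcases hg with (⟨w, rfl⟩ | ⟨e, rfl⟩) | ⟨e, rfl⟩
    · exact gq_mul_vv_mem K E u hu m w
    · exact gq_mul_ed_mem K E u hu m e
    · exact gq_mul_gh_mem K E u hu m e
  | zero => rw [zero_mul]; exact Submodule.zero_mem _
  | add x y _ _ hx hy => rw [add_mul]; exact Submodule.add_mem _ hx hy
  | smul k x _ hx => rw [smul_mul_assoc]; exact Submodule.smul_mem _ _ hx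

lemma MM_mul_clSub (x : E.CL K false) (hx : x ∈ E.clSub K false) :
    ∀ y ∈ MM K E u hu, y * x ∈ MM K E u hu := by
  let T : NonUnitalSubalgebra K (E.CL K false) :=
    { carrier := {x | ∀ y ∈ MM K E u hu, y * x ∈ MM K E u hu}
      add_mem' := fun hx hy y hyM => by
        rw [mul_add]; exact Submodule.add_mem _ (hx y hyM) (hy y hyM)
      zero_mem' := fun y _ => by rw [mul_zero]; exact Submodule.zero_mem _
      mul_mem' := fun {a b} ha hb y hyM => by
        rw [← mul_assoc]; exact hb _ (ha y hyM)
      smul_mem' := fun k {a} ha y hyM => by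
        rw [mul_smul_comm]; exact Submodule.smul_mem _ _ (ha y hyM) }
  have hle : E.clSub K false ≤ T :=
    NonUnitalAlgebra.adjoin_le fun g hg y hyM => MM_mul_gen_mem K E u hu y hyM g hg
  exact hle hx

lemma MM_mul_qq {w : E.V} (hw : {e : E.Edge | E.s e = w}.Finite) (hne : w ≠ u)
    (y : E.CL K false) (hy : y ∈ MM K E u hu) : y * qq K E w hw = 0 := by
  induction hy using Submodule.span_induction with
  | mem x hx =>
    obtain ⟨m, rfl⟩ := hx
    cases m with
    | nil => rw [gq]; exact qq_mul_qq_ne K E u hu hw hne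
    | cons e m => rw [gq, mul_assoc, gh_mul_qq, mul_zero]
  | zero => rw [zero_mul]
  | add x y _ _ hx hy => rw [add_mul, hx, hy, add_zero]
  | smul k x _ hx => rw [smul_mul_assoc, hx, smul_zero]

lemma vv_mem_clSub (w : E.V) : vv K E w ∈ E.clSub K false :=
  NonUnitalAlgebra.subset_adjoin K (Or.inl (Or.inl ⟨w, rfl⟩))

lemma ed_mem_clSub (e : E.Edge) : ed K E e ∈ E.clSub K false :=
  NonUnitalAlgebra.subset_adjoin K (Or.inl (Or.inr ⟨e, rfl⟩))

lemma gh_mem_clSub (e : E.Edge) : gh K E e ∈ E.clSub K false :=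
  NonUnitalAlgebra.subset_adjoin K (Or.inr ⟨e, rfl⟩)

lemma qq_mem_clSub : qq K E u hu ∈ E.clSub K false := by
  refine sub_mem (vv_mem_clSub K E u) (sum_mem fun e _ => ?_)
  exact mul_mem (ed_mem_clSub K E e) (gh_mem_clSub K E e)

lemma qq_mul_clSub_mul_qq {w : E.V} (hw : {e : E.Edge | E.s e = w}.Finite) (hne : w ≠ u)
    (x : E.CL K false) (hx : x ∈ E.clSub K false) :
    qq K E u hu * x * qq K E w hw = 0 :=
  MM_mul_qq K E u hu hw hne _ (MM_mul_clSub K E u hu x hx _ (gq_mem K E u hu []))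

lemma not_prime_of_two {u w : E.V} (hne : u ≠ w)
    (hu : {e : E.Edge | E.s e = u}.Finite) (hw : {e : E.Edge | E.s e = w}.Finite) :
    ¬ IsPrimeSet (E.clSub K false : Set (E.CL K false)) := by
  rintro ⟨-, h2⟩
  rcases h2 (qq K E u hu) (qq_mem_clSub K E u hu) (qq K E w hw) (qq_mem_clSub K E w hw)
      (fun x hx => qq_mul_clSub_mul_qq K E u hu hw (Ne.symm hne) x hx) with h | h
  · exact qq_ne_zero K E u hu h
  · exact qq_ne_zero K E w hw h

end TwoVertices


section OneVertex

variable (K E)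
variable (v : E.V)

/-- path element `e₁ ⋯ eₖ` (with vertex `v` for the empty path) -/
noncomputable def Pw : List E.Edge → E.CL K false
  | [] => vv K E v
  | e :: l => ed K E e * Pw l

/-- ghost path element `eₖ* ⋯ e₁*` -/
noncomputable def Qw : List E.Edge → E.CL K false
  | [] => vv K E v
  | e :: m => Qw m * gh K E e

variable (hv : ∀ w : E.V, w = v)

section withHv
include hv

lemma hve (e : E.Edge) : vv K E v * ed K E e = ed K E e := by
  have := vv_mul_ed K E e; rwa [hv (E.s e)] at this

lemma hev (e : E.Edge) : ed K E e * vv K E v = ed K E e := by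
  have := ed_mul_vv K E e; rwa [hv (E.r e)] at this

lemma hvg (e : E.Edge) : vv K E v * gh K E e = gh K E e := by
  have := vv_mul_gh K E e; rwa [hv (E.r e)] at this

lemma hgv (e : E.Edge) : gh K E e * vv K E v = gh K E e := by
  have := gh_mul_vv K E e; rwa [hv (E.s e)] at this

lemma hge (e : E.Edge) : gh K E e * ed K E e = vv K E v := by
  have := gh_mul_ed K E e; rwa [hv (E.r e)] at this

lemma vv_Pw (l : List E.Edge) : vv K E v * Pw K E v l = Pw K E v l := by
  cases l with
  | nil => exact vv_mul_self K E v
  | cons e l => rw [Pw, ← mul_assoc, hve K E v hv]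

lemma Pw_vv (l : List E.Edge) : Pw K E v l * vv K E v = Pw K E v l := by
  induction l with
  | nil => exact vv_mul_self K E v
  | cons e l ih => rw [Pw, mul_assoc, ih]

lemma vv_Qw (m : List E.Edge) : vv K E v * Qw K E v m = Qw K E v m := by
  induction m with
  | nil => exact vv_mul_self K E v
  | cons e m ih => rw [Qw, ← mul_assoc, ih]

lemma Qw_vv (m : List E.Edge) : Qw K E v m * vv K E v = Qw K E v m := by
  cases m with
  | nil => exact vv_mul_self K E v
  | cons e m => rw [Qw, mul_assoc, hgv K E v hv]

lemma Pw_append (l l' : List E.Edge) :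
    Pw K E v (l ++ l') = Pw K E v l * Pw K E v l' := by
  induction l with
  | nil => rw [List.nil_append, Pw, vv_Pw K E v hv]
  | cons e l ih => rw [List.cons_append, Pw, Pw, ih, mul_assoc]

lemma Qw_append (m m' : List E.Edge) :
    Qw K E v (m ++ m') = Qw K E v m' * Qw K E v m := by
  induction m with
  | nil => rw [List.nil_append, Qw, Qw_vv K E v hv]
  | cons e m ih => rw [List.cons_append, Qw, Qw, ih, mul_assoc]

lemma Qw_Pw_cancel (m t : List E.Edge) :
    Qw K E v m * Pw K E v (m ++ t) = Pw K E v t := by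
  induction m with
  | nil => rw [List.nil_append, Qw, vv_Pw K E v hv]
  | cons e m ih =>
    rw [List.cons_append, Qw, Pw, mul_assoc, ← mul_assoc (gh K E e), hge K E v hv,
      vv_Pw K E v hv, ih]

lemma Qw_Pw_cancel' (l t : List E.Edge) :
    Qw K E v (l ++ t) * Pw K E v l = Qw K E v t := by
  induction l with
  | nil => rw [List.nil_append, Pw, Qw_vv K E v hv]
  | cons e l ih =>
    rw [List.cons_append, Qw, Pw, mul_assoc, ← mul_assoc (gh K E e), hge K E v hv,
      vv_Pw K E v hv, ih]

lemma Qw_Pw_zero (m l : List E.Edge) (h1 : ¬ m <+: l) (h2 : ¬ l <+: m) :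
    Qw K E v m * Pw K E v l = 0 := by
  induction m generalizing l with
  | nil => exact absurd (List.nil_prefix) h1
  | cons e m ih =>
    cases l with
    | nil => exact absurd (List.nil_prefix) h2
    | cons f l =>
      by_cases hef : e = f
      · subst hef
        rw [Qw, Pw, mul_assoc, ← mul_assoc (gh K E e), hge K E v hv, vv_Pw K E v hv]
        exact ih l (fun h => h1 (List.cons_prefix_cons.mpr ⟨rfl, h⟩))
          (fun h => h2 (List.cons_prefix_cons.mpr ⟨rfl, h⟩))
      · rw [Qw, Pw, mul_assoc, ← mul_assoc (gh K E e), gh_mul_ed_ne K E hef, zero_mul, mul_zero]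

end withHv

lemma prefix_trichotomy (m l : List E.Edge) :
    (∃ t, l = m ++ t) ∨ (∃ t, t ≠ [] ∧ m = l ++ t) ∨ (¬ m <+: l ∧ ¬ l <+: m) := by
  classical
  by_cases h1 : m <+: l
  · obtain ⟨t, rfl⟩ := h1
    exact Or.inl ⟨t, rfl⟩
  · by_cases h2 : l <+: m
    · obtain ⟨t, rfl⟩ := h2
      refine Or.inr (Or.inl ⟨t, fun ht => ?_, rfl⟩)
      subst ht
      exact h1 (by simp)
    · exact Or.inr (Or.inr ⟨h1, h2⟩)

variable (hu : {e : E.Edge | E.s e = v}.Finite)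

section withHv2
include hv

lemma p0_Pw (l : List E.Edge) (hl : l ≠ []) :
    qq K E v hu * Pw K E v l = 0 := by
  cases l with
  | nil => exact absurd rfl hl
  | cons e l => rw [Pw, ← mul_assoc, qq_mul_ed, zero_mul]

lemma Qw_p0 (m : List E.Edge) (hm : m ≠ []) :
    Qw K E v m * qq K E v hu = 0 := by
  cases m with
  | nil => exact absurd rfl hm
  | cons e m => rw [Qw, mul_assoc, gh_mul_qq, mul_zero]

open Classical in
lemma p0_Pw_p0 (w : List E.Edge) :
    qq K E v hu * Pw K E v w * qq K E v hu = if w = [] then qq K E v hu else 0 := by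
  by_cases hw : w = []
  · subst hw
    rw [if_pos rfl, Pw, qq_mul_vv_self, qq_mul_qq_self]
  · rw [if_neg hw, p0_Pw K E v hv hu w hw, zero_mul]

open Classical in
lemma p0_Qw_p0 (w : List E.Edge) :
    qq K E v hu * Qw K E v w * qq K E v hu = if w = [] then qq K E v hu else 0 := by
  by_cases hw : w = []
  · subst hw
    rw [if_pos rfl, Qw, qq_mul_vv_self, qq_mul_qq_self]
  · rw [if_neg hw, mul_assoc, Qw_p0 K E v hv hu w hw, mul_zero]

open Classical in
lemma core (a b : List E.Edge) :
    qq K E v hu * (Qw K E v a * Pw K E v b) * qq K E v hu =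
      if a = b then qq K E v hu else 0 := by
  classical
  rcases prefix_trichotomy E a b with ⟨t, rfl⟩ | ⟨t, ht, rfl⟩ | ⟨h1, h2⟩
  · rw [Qw_Pw_cancel K E v hv, p0_Pw_p0 K E v hv hu]
    by_cases htn : t = []
    · subst htn; simp
    · rw [if_neg htn, if_neg (by simpa using (Ne.symm htn))]
  · rw [Qw_Pw_cancel' K E v hv, p0_Qw_p0 K E v hv hu, if_neg ht,
      if_neg (by simpa using ht)]
  · rw [Qw_Pw_zero K E v hv a b h1 h2, mul_zero, zero_mul,
      if_neg (fun h : a = b => h1 (h ▸ List.prefix_refl a))]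

open Classical in
lemma sandwich (p q p₁ q₁ : List E.Edge) :
    qq K E v hu * ((Qw K E v p₁ * Pw K E v p) * (Qw K E v q * Pw K E v q₁)) * qq K E v hu =
      if ∃ t, p₁ = p ++ t ∧ q₁ = q ++ t then qq K E v hu else 0 := by
  classical
  rcases prefix_trichotomy E p₁ p with ⟨t₁, rfl⟩ | ⟨t₁, ht₁, rfl⟩ | ⟨h1, h2⟩
  -- case A : p = p₁ ++ t₁
  · rw [Qw_Pw_cancel K E v hv]
    by_cases htn : t₁ = []
    · subst htn
      rw [List.append_nil, Pw, ← mul_assoc (vv K E v), vv_Qw K E v hv]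
      rcases prefix_trichotomy E q q₁ with ⟨u, rfl⟩ | ⟨u, hu', rfl⟩ | ⟨h1', h2'⟩
      · rw [Qw_Pw_cancel K E v hv, p0_Pw_p0 K E v hv hu]
        by_cases hun : u = []
        · subst hun
          rw [if_pos rfl, if_pos ⟨[], by simp, by simp⟩]
        · rw [if_neg hun, if_neg]
          rintro ⟨t, h1, h2⟩
          rw [List.self_eq_append_right] at h1
          subst h1
          rw [List.append_nil, List.append_right_eq_self] at h2
          exact hun h2
      · rw [Qw_Pw_cancel' K E v hv, p0_Qw_p0 K E v hv hu, if_neg hu', if_neg]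
        rintro ⟨t, h1, h2⟩
        rw [List.self_eq_append_right] at h1
        subst h1
        rw [List.append_nil, List.self_eq_append_right] at h2
        exact hu' h2
      · rw [Qw_Pw_zero K E v hv q q₁ h1' h2', mul_zero, zero_mul, if_neg]
        rintro ⟨t, h1, h2⟩
        rw [List.self_eq_append_right] at h1
        subst h1
        rw [List.append_nil] at h2
        exact h1' (h2 ▸ List.prefix_refl q)
    · have hkill : qq K E v hu * Pw K E v t₁ = 0 := p0_Pw K E v hv hu t₁ htn
      rw [← mul_assoc (qq K E v hu), hkill, zero_mul, zero_mul, if_neg]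
      rintro ⟨t, h1, h2⟩
      rw [List.append_assoc, List.self_eq_append_right] at h1
      exact htn (List.append_eq_nil_iff.mp h1).1
  -- case B : p₁ = p ++ t₁, t₁ ≠ []
  · rw [Qw_Pw_cancel' K E v hv]
    rcases prefix_trichotomy E q q₁ with ⟨u, rfl⟩ | ⟨u, hu', rfl⟩ | ⟨h1', h2'⟩
    · rw [Qw_Pw_cancel K E v hv, core K E v hv hu]
      by_cases htu : t₁ = u
      · subst htu
        rw [if_pos rfl, if_pos ⟨t₁, rfl, rfl⟩]
      · rw [if_neg htu, if_neg]
        rintro ⟨t, h1, h2⟩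
        rw [List.append_right_inj] at h1
        subst h1
        rw [List.append_right_inj] at h2
        exact htu h2.symm
    · rw [Qw_Pw_cancel' K E v hv, ← Qw_append K E v hv, p0_Qw_p0 K E v hv hu,
        if_neg (by simp [hu']), if_neg]
      rintro ⟨t, h1, h2⟩
      rw [List.append_right_inj] at h1
      subst h1
      rw [List.append_assoc, List.self_eq_append_right] at h2
      exact hu' (List.append_eq_nil_iff.mp h2).1
    · rw [Qw_Pw_zero K E v hv q q₁ h1' h2', mul_zero, mul_zero, zero_mul, if_neg]
      rintro ⟨t, h1, h2⟩
      rw [List.append_right_inj] at h1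
      subst h1
      exact h1' ⟨t₁, h2.symm⟩
  -- case C
  · rw [Qw_Pw_zero K E v hv p₁ p h1 h2, zero_mul, mul_zero, zero_mul, if_neg]
    rintro ⟨t, h1', h2'⟩
    exact h2 ⟨t, h1'.symm⟩

end withHv2

end OneVertex


section Span

variable (K E)
variable (v : E.V)

/-- basis elements `p q*` -/
noncomputable def Bas (pq : List E.Edge × List E.Edge) : E.CL K false :=
  Pw K E v pq.1 * Qw K E v pq.2

noncomputable def SpanB : Submodule K (E.CL K false) :=
  Submodule.span K (Set.range (Bas K E v))

variable (hv : ∀ w : E.V, w = v)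

include hv in
lemma Bas_mul_Bas (pq rs : List E.Edge × List E.Edge) :
    Bas K E v pq * Bas K E v rs ∈ SpanB K E v := by
  obtain ⟨p, q⟩ := pq; obtain ⟨r, s⟩ := rs
  rcases prefix_trichotomy E q r with ⟨t, rfl⟩ | ⟨t, ht, rfl⟩ | ⟨h1, h2⟩
  · have heq : Bas K E v (p, q) * Bas K E v (q ++ t, s) = Bas K E v (p ++ t, s) := by
      show (Pw K E v p * Qw K E v q) * (Pw K E v (q ++ t) * Qw K E v s) = _
      rw [mul_assoc (Pw K E v p), ← mul_assoc (Qw K E v q), Qw_Pw_cancel K E v hv,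
        ← mul_assoc, ← Pw_append K E v hv]
      rfl
    rw [heq]
    exact Submodule.subset_span ⟨(p ++ t, s), rfl⟩
  · have heq : Bas K E v (p, r ++ t) * Bas K E v (r, s) = Bas K E v (p, s ++ t) := by
      show (Pw K E v p * Qw K E v (r ++ t)) * (Pw K E v r * Qw K E v s) = _
      rw [mul_assoc (Pw K E v p), ← mul_assoc (Qw K E v (r ++ t)), Qw_Pw_cancel' K E v hv,
        ← Qw_append K E v hv]
      rfl
    rw [heq]
    exact Submodule.subset_span ⟨(p, s ++ t), rfl⟩
  · have heq : Bas K E v (p, q) * Bas K E v (r, s) = 0 := by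
      show (Pw K E v p * Qw K E v q) * (Pw K E v r * Qw K E v s) = _
      rw [mul_assoc (Pw K E v p), ← mul_assoc (Qw K E v q), Qw_Pw_zero K E v hv q r h1 h2,
        zero_mul, mul_zero]
    rw [heq]
    exact Submodule.zero_mem _

include hv in
lemma clSub_le_SpanB : (E.clSub K false : Set (E.CL K false)) ⊆ (SpanB K E v : Set (E.CL K false)) := by
  let T : NonUnitalSubalgebra K (E.CL K false) :=
    { carrier := (SpanB K E v : Set (E.CL K false))
      add_mem' := fun ha hb => Submodule.add_mem _ ha hb
      zero_mem' := Submodule.zero_mem _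
      smul_mem' := fun k {x} hx => Submodule.smul_mem _ k hx
      mul_mem' := by
        intro a b ha hb
        induction ha using Submodule.span_induction with
        | mem x hx =>
          induction hb using Submodule.span_induction with
          | mem y hy =>
            obtain ⟨pq, rfl⟩ := hx
            obtain ⟨rs, rfl⟩ := hy
            exact Bas_mul_Bas K E v hv pq rs
          | zero => rw [mul_zero]; exact Submodule.zero_mem _
          | add y z _ _ hy hz => rw [mul_add]; exact Submodule.add_mem _ hy hz
          | smul k y _ hy => rw [mul_smul_comm]; exact Submodule.smul_mem _ _ hy
        | zero => rw [zero_mul]; exact Submodule.zero_mem _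
        | add x y _ _ hx hy => rw [add_mul]; exact Submodule.add_mem _ hx hy
        | smul k x _ hx => rw [smul_mul_assoc]; exact Submodule.smul_mem _ _ hx }
  have hgen : (Set.range (E.clvtx K false) ∪ Set.range (E.cledg K false) ∪
      Set.range (E.clghost K false)) ⊆ (T : Set (E.CL K false)) := by
    rintro g ((⟨w, rfl⟩ | ⟨e, rfl⟩) | ⟨e, rfl⟩)
    · have heq : E.clvtx K false w = Bas K E v ([], []) := by
        rw [hv w]
        show vv K E v = Pw K E v [] * Qw K E v []
        rw [Pw, Qw, vv_mul_self]
      show E.clvtx K false w ∈ SpanB K E v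
      rw [heq]
      exact Submodule.subset_span ⟨([], []), rfl⟩
    · have heq : E.cledg K false e = Bas K E v ([e], []) := by
        show ed K E e = Pw K E v [e] * Qw K E v []
        rw [Pw, Pw, Qw, mul_assoc, vv_mul_self, hev K E v hv]
      show E.cledg K false e ∈ SpanB K E v
      rw [heq]
      exact Submodule.subset_span ⟨([e], []), rfl⟩
    · have heq : E.clghost K false e = Bas K E v ([], [e]) := by
        show gh K E e = Pw K E v [] * Qw K E v [e]
        rw [Pw, Qw, Qw, ← mul_assoc, vv_mul_self, hvg K E v hv]
      show E.clghost K false e ∈ SpanB K E v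
      rw [heq]
      exact Submodule.subset_span ⟨([], [e]), rfl⟩
  exact fun x hx => NonUnitalAlgebra.adjoin_le hgen hx

lemma Pw_mem (l : List E.Edge) : Pw K E v l ∈ E.clSub K false := by
  induction l with
  | nil => exact vv_mem_clSub K E v
  | cons e l ih => exact mul_mem (ed_mem_clSub K E e) ih

lemma Qw_mem (m : List E.Edge) : Qw K E v m ∈ E.clSub K false := by
  induction m with
  | nil => exact vv_mem_clSub K E v
  | cons e m ih => exact mul_mem ih (gh_mem_clSub K E e)

variable (hu : {e : E.Edge | E.s e = v}.Finite)

open Classical in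
include hv in
lemma sandwich' (p q p₁ q₁ : List E.Edge) :
    qq K E v hu * ((Qw K E v p₁ * Bas K E v (p, q)) * Pw K E v q₁) * qq K E v hu =
      if ∃ t, p₁ = p ++ t ∧ q₁ = q ++ t then qq K E v hu else 0 := by
  rw [← sandwich K E v hv hu p q p₁ q₁]
  simp only [Bas, mul_assoc]

open Classical in
include hv in
lemma extract (c : (List E.Edge × List E.Edge) →₀ K) (p₁ q₁ : List E.Edge)
    (hmem : (p₁, q₁) ∈ c.support)
    (hmin : ∀ pq ∈ c.support, p₁.length ≤ pq.1.length) :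
    qq K E v hu * ((Qw K E v p₁ * (c.sum fun pq k => k • Bas K E v pq)) * Pw K E v q₁) *
      qq K E v hu = c (p₁, q₁) • qq K E v hu := by
  rw [Finsupp.sum]
  simp only [Finset.mul_sum, Finset.sum_mul, smul_mul_assoc, mul_smul_comm]
  rw [Finset.sum_eq_single_of_mem (p₁, q₁) hmem]
  · rw [sandwich' K E v hv hu, if_pos ⟨[], by simp, by simp⟩]
  · rintro ⟨p, q⟩ hpq hne
    rw [sandwich' K E v hv hu, if_neg, smul_zero]
    rintro ⟨t, h1, h2⟩
    have hlen : p₁.length ≤ p.length := hmin (p, q) hpq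
    have h1len : p₁.length = p.length + t.length := by rw [h1, List.length_append]
    have ht : t = [] := List.length_eq_zero_iff.mp (by omega)
    subst ht
    rw [List.append_nil] at h1 h2
    exact hne (by rw [h1, h2])

include hv hu in
lemma prime_one : IsPrimeSet (E.clSub K false : Set (E.CL K false)) := by
  classical
  constructor
  · exact ⟨vv K E v, vv_mem_clSub K E v, vv_ne_zero K E v⟩
  intro a ha b hb hab
  by_contra hcon
  push_neg at hcon
  obtain ⟨ha0, hb0⟩ := hcon
  obtain ⟨c, hc⟩ := Finsupp.mem_span_range_iff_exists_finsupp.mp (clSub_le_SpanB K E v hv ha)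
  obtain ⟨d, hd⟩ := Finsupp.mem_span_range_iff_exists_finsupp.mp (clSub_le_SpanB K E v hv hb)
  have hcne : c.support.Nonempty := Finsupp.support_nonempty_iff.mpr
    (fun h => ha0 (by rw [← hc, h, Finsupp.sum_zero_index]))
  have hdne : d.support.Nonempty := Finsupp.support_nonempty_iff.mpr
    (fun h => hb0 (by rw [← hd, h, Finsupp.sum_zero_index]))
  obtain ⟨⟨p₁, q₁⟩, hmem₁, hmin₁⟩ := c.support.exists_min_image (fun pq => pq.1.length) hcne
  obtain ⟨⟨r₁, s₁⟩, hmem₂, hmin₂⟩ := d.support.exists_min_image (fun pq => pq.1.length) hdne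
  have h1 : qq K E v hu * ((Qw K E v p₁ * a) * Pw K E v q₁) * qq K E v hu =
      c (p₁, q₁) • qq K E v hu := by
    rw [← hc]
    exact extract K E v hv hu c p₁ q₁ hmem₁ (fun pq hpq => hmin₁ pq hpq)
  have h2 : qq K E v hu * ((Qw K E v r₁ * b) * Pw K E v s₁) * qq K E v hu =
      d (r₁, s₁) • qq K E v hu := by
    rw [← hd]
    exact extract K E v hv hu d r₁ s₁ hmem₂ (fun pq hpq => hmin₂ pq hpq)
  set x := Pw K E v q₁ * (qq K E v hu * Qw K E v r₁) with hx
  have hxmem : x ∈ E.clSub K false :=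
    mul_mem (Pw_mem K E v q₁) (mul_mem (qq_mem_clSub K E v hu) (Qw_mem K E v r₁))
  have h0 : a * x * b = 0 := hab x hxmem
  have hdup : ∀ z : E.CL K false, qq K E v hu * z = qq K E v hu * (qq K E v hu * z) := by
    intro z
    rw [← mul_assoc, qq_mul_qq_self]
  have heq : (qq K E v hu * ((Qw K E v p₁ * a) * Pw K E v q₁) * qq K E v hu) *
      (qq K E v hu * ((Qw K E v r₁ * b) * Pw K E v s₁) * qq K E v hu) =
      qq K E v hu * ((Qw K E v p₁ * (a * x * b)) * Pw K E v s₁) * qq K E v hu := by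
    rw [hx]
    simp only [mul_assoc]
    rw [← hdup (Qw K E v r₁ * (b * (Pw K E v s₁ * qq K E v hu)))]
  rw [h1, h2, h0] at heq
  simp only [mul_zero, zero_mul] at heq
  rw [smul_mul_assoc, mul_smul_comm, qq_mul_qq_self, smul_smul] at heq
  have hc1 : c (p₁, q₁) ≠ 0 := Finsupp.mem_support_iff.mp hmem₁
  have hd1 : d (r₁, s₁) ≠ 0 := Finsupp.mem_support_iff.mp hmem₂
  exact smul_ne_zero (mul_ne_zero hc1 hd1) (qq_ne_zero K E v hu) heq

end Span

end Stmt14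

/-- For a row-finite graph `E`, the Cohn path algebra `C_K(E)` is prime
if and only if `E` has exactly one vertex. -/
theorem stmt14 (K : Type) [Field K] (E : DirGraph)
    (hrow : ∀ v : E.V, {e : E.Edge | E.s e = v}.Finite) :
    IsPrimeSet (E.clSub K false : Set (E.CL K false)) ↔ ∃ v : E.V, ∀ w : E.V, w = v := by
  constructor
  · intro hp
    by_contra hno
    push_neg at hno
    by_cases hV : Nonempty E.V
    · obtain ⟨v⟩ := hV
      obtain ⟨w, hw⟩ := hno v
      exact Stmt14.not_prime_of_two K E hw (hrow w) (hrow v) hp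
    · obtain ⟨⟨a, haS, ha0⟩, -⟩ := hp
      have hempty : (Set.range (E.clvtx K false) ∪ Set.range (E.cledg K false) ∪
          Set.range (E.clghost K false)) = (∅ : Set (E.CL K false)) := by
        ext g
        simp only [Set.mem_union, Set.mem_range, Set.mem_empty_iff_false, iff_false]
        rintro ((⟨w, -⟩ | ⟨e, -⟩) | ⟨e, -⟩)
        · exact hV ⟨w⟩
        · exact hV ⟨E.s e⟩
        · exact hV ⟨E.s e⟩
      have hbot : a ∈ (⊥ : NonUnitalSubalgebra K (E.CL K false)) := by
        have h1 : E.clSub K false = ⊥ := by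
          rw [DirGraph.clSub, hempty, NonUnitalAlgebra.adjoin_empty]
        rw [← h1]
        exact haS
      exact ha0 (NonUnitalAlgebra.mem_bot.mp hbot)
  · rintro ⟨v, hv⟩
    exact Stmt14.prime_one K E v hv (hrow v)
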